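/- (Block-triangular invariance of exogeneity tests.) Under the rank condition, let R₁₁ be a nonzero real scalar, R₂₁ ∈ ℝ^G, and R₂₂ an invertible G×G real matrix; set y* := R₁₁·y + Y·R₂₁ and Y* := Y·R₂₂. Then the rank condition holds for the pair (y*, Y*) with the same X₁, X₂, and, denoting by a star the corresponding quantities computed from (y*, Y*): C₁* = R₂₂⁻¹C₁, β̃* − β̂* = R₁₁R₂₂⁻¹(β̃ − β̂), Δ̂* = R₂₂⁻¹Δ̂(R₂₂⁻¹)ᵀ, σ̂*² = R₁₁²σ̂², σ̃*² = R₁₁²σ̃², σ̃₁*² = R₁₁²σ̃₁², σ̃₂*² = R₁₁²σ̃₂²; consequently (whenever the relevant scaling factors are nonzero or covariance matrices invertible, which holds for (y*, Y*) iff it holds for (y, Y)) every exogeneity statistic is invariant: T_i* = T_i for i = 1, 2, 3, 4, H_j* = H_j for j = 1, 2, 3, and R* = R. -/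

import Mathlib

open Matrix

variable {T G k₁ k₂ : ℕ}

/-- Orthogonal projection `P̄[A] = A(AᵀA)⁻¹Aᵀ` onto the column space of `A`. -/
noncomputable def projM {n : Type*} [Fintype n] [DecidableEq n]
    (A : Matrix (Fin T) n ℝ) : Matrix (Fin T) (Fin T) ℝ :=
  A * (Aᵀ * A)⁻¹ * Aᵀ

/-- The annihilator `M̄[A] = I - P̄[A]`. -/
noncomputable def annM {n : Type*} [Fintype n] [DecidableEq n]
    (A : Matrix (Fin T) n ℝ) : Matrix (Fin T) (Fin T) ℝ :=
  1 - projM A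

noncomputable def M1 (X₁ : Matrix (Fin T) (Fin k₁) ℝ) : Matrix (Fin T) (Fin T) ℝ :=
  annM X₁

noncomputable def Pm (X₁ : Matrix (Fin T) (Fin k₁) ℝ) (X₂ : Matrix (Fin T) (Fin k₂) ℝ) :
    Matrix (Fin T) (Fin T) ℝ :=
  projM (fromCols X₁ X₂)

noncomputable def Mm (X₁ : Matrix (Fin T) (Fin k₁) ℝ) (X₂ : Matrix (Fin T) (Fin k₂) ℝ) :
    Matrix (Fin T) (Fin T) ℝ :=
  annM (fromCols X₁ X₂)

noncomputable def N1 (X₁ : Matrix (Fin T) (Fin k₁) ℝ) (X₂ : Matrix (Fin T) (Fin k₂) ℝ) :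
    Matrix (Fin T) (Fin T) ℝ :=
  M1 X₁ * Pm X₁ X₂

noncomputable def B1 (Y : Matrix (Fin T) (Fin G) ℝ) (X₁ : Matrix (Fin T) (Fin k₁) ℝ) :
    Matrix (Fin G) (Fin T) ℝ :=
  (Yᵀ * M1 X₁ * Y)⁻¹ * (Yᵀ * M1 X₁)

noncomputable def B2 (Y : Matrix (Fin T) (Fin G) ℝ) (X₁ : Matrix (Fin T) (Fin k₁) ℝ)
    (X₂ : Matrix (Fin T) (Fin k₂) ℝ) : Matrix (Fin G) (Fin T) ℝ :=
  (Yᵀ * N1 X₁ X₂ * Y)⁻¹ * (Yᵀ * N1 X₁ X₂)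

noncomputable def C1 (Y : Matrix (Fin T) (Fin G) ℝ) (X₁ : Matrix (Fin T) (Fin k₁) ℝ)
    (X₂ : Matrix (Fin T) (Fin k₂) ℝ) : Matrix (Fin G) (Fin T) ℝ :=
  B2 Y X₁ X₂ - B1 Y X₁

/-- OLS estimator `β̂`. -/
noncomputable def betaOLS (y : Fin T → ℝ) (Y : Matrix (Fin T) (Fin G) ℝ)
    (X₁ : Matrix (Fin T) (Fin k₁) ℝ) : Fin G → ℝ :=
  B1 Y X₁ *ᵥ y

/-- 2SLS estimator `β̃`. -/
noncomputable def beta2S (y : Fin T → ℝ) (Y : Matrix (Fin T) (Fin G) ℝ)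
    (X₁ : Matrix (Fin T) (Fin k₁) ℝ) (X₂ : Matrix (Fin T) (Fin k₂) ℝ) : Fin G → ℝ :=
  B2 Y X₁ X₂ *ᵥ y

noncomputable def OmIV (Y : Matrix (Fin T) (Fin G) ℝ) (X₁ : Matrix (Fin T) (Fin k₁) ℝ)
    (X₂ : Matrix (Fin T) (Fin k₂) ℝ) : Matrix (Fin G) (Fin G) ℝ :=
  (T : ℝ)⁻¹ • (Yᵀ * N1 X₁ X₂ * Y)

noncomputable def OmLS (Y : Matrix (Fin T) (Fin G) ℝ) (X₁ : Matrix (Fin T) (Fin k₁) ℝ) :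
    Matrix (Fin G) (Fin G) ℝ :=
  (T : ℝ)⁻¹ • (Yᵀ * M1 X₁ * Y)

noncomputable def SigV (Y : Matrix (Fin T) (Fin G) ℝ) (X₁ : Matrix (Fin T) (Fin k₁) ℝ)
    (X₂ : Matrix (Fin T) (Fin k₂) ℝ) : Matrix (Fin G) (Fin G) ℝ :=
  (T : ℝ)⁻¹ • (Yᵀ * Mm X₁ X₂ * Y)

noncomputable def Dhat (Y : Matrix (Fin T) (Fin G) ℝ) (X₁ : Matrix (Fin T) (Fin k₁) ℝ)
    (X₂ : Matrix (Fin T) (Fin k₂) ℝ) : Matrix (Fin G) (Fin G) ℝ :=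
  (OmIV Y X₁ X₂)⁻¹ - (OmLS Y X₁)⁻¹

noncomputable def Psi0 (Y : Matrix (Fin T) (Fin G) ℝ) (X₁ : Matrix (Fin T) (Fin k₁) ℝ)
    (X₂ : Matrix (Fin T) (Fin k₂) ℝ) : Matrix (Fin T) (Fin T) ℝ :=
  (C1 Y X₁ X₂)ᵀ * (Dhat Y X₁ X₂)⁻¹ * C1 Y X₁ X₂

noncomputable def N2 (Y : Matrix (Fin T) (Fin G) ℝ) (X₁ : Matrix (Fin T) (Fin k₁) ℝ)
    (X₂ : Matrix (Fin T) (Fin k₂) ℝ) : Matrix (Fin T) (Fin T) ℝ :=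
  1 - M1 X₁ * Y * B2 Y X₁ X₂

noncomputable def Lam1 (Y : Matrix (Fin T) (Fin G) ℝ) (X₁ : Matrix (Fin T) (Fin k₁) ℝ)
    (X₂ : Matrix (Fin T) (Fin k₂) ℝ) : Matrix (Fin T) (Fin T) ℝ :=
  (T : ℝ)⁻¹ • (N1 X₁ X₂ * annM (N1 X₁ X₂ * Y) * N1 X₁ X₂)

noncomputable def Lam2 (Y : Matrix (Fin T) (Fin G) ℝ) (X₁ : Matrix (Fin T) (Fin k₁) ℝ)
    (X₂ : Matrix (Fin T) (Fin k₂) ℝ) : Matrix (Fin T) (Fin T) ℝ :=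
  M1 X₁ * ((T : ℝ)⁻¹ • annM (M1 X₁ * Y) - Psi0 Y X₁ X₂) * M1 X₁

noncomputable def Lam3 (Y : Matrix (Fin T) (Fin G) ℝ) (X₁ : Matrix (Fin T) (Fin k₁) ℝ)
    (X₂ : Matrix (Fin T) (Fin k₂) ℝ) : Matrix (Fin T) (Fin T) ℝ :=
  (T : ℝ)⁻¹ • (M1 X₁ * (N2 Y X₁ X₂)ᵀ * N2 Y X₁ X₂ * M1 X₁)

noncomputable def Lam4 (Y : Matrix (Fin T) (Fin G) ℝ) (X₁ : Matrix (Fin T) (Fin k₁) ℝ) :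
    Matrix (Fin T) (Fin T) ℝ :=
  (T : ℝ)⁻¹ • (M1 X₁ * annM (M1 X₁ * Y) * M1 X₁)

def Ybar (Y : Matrix (Fin T) (Fin G) ℝ) (X₁ : Matrix (Fin T) (Fin k₁) ℝ) :
    Matrix (Fin T) (Fin G ⊕ Fin k₁) ℝ :=
  fromCols Y X₁

def Zfull (Y : Matrix (Fin T) (Fin G) ℝ) (X₁ : Matrix (Fin T) (Fin k₁) ℝ)
    (X₂ : Matrix (Fin T) (Fin k₂) ℝ) : Matrix (Fin T) (Fin G ⊕ (Fin k₁ ⊕ Fin k₂)) ℝ :=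
  fromCols Y (fromCols X₁ X₂)

noncomputable def PsiR (Y : Matrix (Fin T) (Fin G) ℝ) (X₁ : Matrix (Fin T) (Fin k₁) ℝ)
    (X₂ : Matrix (Fin T) (Fin k₂) ℝ) : Matrix (Fin T) (Fin T) ℝ :=
  (T : ℝ)⁻¹ • (annM (Ybar Y X₁) - annM (Zfull Y X₁ X₂))

noncomputable def LamR (Y : Matrix (Fin T) (Fin G) ℝ) (X₁ : Matrix (Fin T) (Fin k₁) ℝ)
    (X₂ : Matrix (Fin T) (Fin k₂) ℝ) : Matrix (Fin T) (Fin T) ℝ :=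
  (T : ℝ)⁻¹ • annM (Zfull Y X₁ X₂)

/-- `σ̂² = (1/T)(y−Yβ̂)ᵀM₁(y−Yβ̂)`. -/
noncomputable def sigHat2 (y : Fin T → ℝ) (Y : Matrix (Fin T) (Fin G) ℝ)
    (X₁ : Matrix (Fin T) (Fin k₁) ℝ) : ℝ :=
  (T : ℝ)⁻¹ * ((y - Y *ᵥ betaOLS y Y X₁) ⬝ᵥ (M1 X₁ *ᵥ (y - Y *ᵥ betaOLS y Y X₁)))

/-- `σ̃² = (1/T)(y−Yβ̃)ᵀM₁(y−Yβ̃)`. -/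
noncomputable def sigTil2 (y : Fin T → ℝ) (Y : Matrix (Fin T) (Fin G) ℝ)
    (X₁ : Matrix (Fin T) (Fin k₁) ℝ) (X₂ : Matrix (Fin T) (Fin k₂) ℝ) : ℝ :=
  (T : ℝ)⁻¹ * ((y - Y *ᵥ beta2S y Y X₁ X₂) ⬝ᵥ (M1 X₁ *ᵥ (y - Y *ᵥ beta2S y Y X₁ X₂)))

/-- `σ̃₁² = (1/T)(y−Yβ̃)ᵀN₁(y−Yβ̃)`. -/
noncomputable def sigTil1sq (y : Fin T → ℝ) (Y : Matrix (Fin T) (Fin G) ℝ)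
    (X₁ : Matrix (Fin T) (Fin k₁) ℝ) (X₂ : Matrix (Fin T) (Fin k₂) ℝ) : ℝ :=
  (T : ℝ)⁻¹ * ((y - Y *ᵥ beta2S y Y X₁ X₂) ⬝ᵥ (N1 X₁ X₂ *ᵥ (y - Y *ᵥ beta2S y Y X₁ X₂)))

/-- `σ̃₂² = σ̂² − (β̃−β̂)ᵀΔ̂⁻¹(β̃−β̂)`. -/
noncomputable def sigTil2sq (y : Fin T → ℝ) (Y : Matrix (Fin T) (Fin G) ℝ)
    (X₁ : Matrix (Fin T) (Fin k₁) ℝ) (X₂ : Matrix (Fin T) (Fin k₂) ℝ) : ℝ :=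
  sigHat2 y Y X₁ -
    (beta2S y Y X₁ X₂ - betaOLS y Y X₁) ⬝ᵥ
      ((Dhat Y X₁ X₂)⁻¹ *ᵥ (beta2S y Y X₁ X₂ - betaOLS y Y X₁))

/-- The rank condition: `X₁`, `X = [X₁, X₂]`, `[Y, X]` and `[P̄[X]Y, X₁]` all have
full column rank. -/
def RankCond (Y : Matrix (Fin T) (Fin G) ℝ) (X₁ : Matrix (Fin T) (Fin k₁) ℝ)
    (X₂ : Matrix (Fin T) (Fin k₂) ℝ) : Prop :=
  X₁.rank = k₁ ∧ (fromCols X₁ X₂).rank = k₁ + k₂ ∧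
    (fromCols Y (fromCols X₁ X₂)).rank = G + (k₁ + k₂) ∧
    (fromCols (Pm X₁ X₂ * Y) X₁).rank = G + k₁


/-! ### Auxiliary lemmas -/

section AuxGeneric

lemma aux_smul_inv {n : Type*} [Fintype n] [DecidableEq n] (c : ℝ) (M : Matrix n n ℝ) :
    (c • M)⁻¹ = c⁻¹ • M⁻¹ := by
  rcases isEmpty_or_nonempty n with h | h
  · apply Subsingleton.elim (α := Matrix n n ℝ)
  rcases eq_or_ne c 0 with rfl | hc
  · rw [zero_smul, Matrix.inv_zero, _root_.inv_zero, zero_smul]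
  by_cases hM : IsUnit M.det
  · haveI := invertibleOfNonzero hc
    rw [Matrix.inv_smul (A := M) c hM, invOf_eq_inv]
  · have h1 : ¬ IsUnit (c • M).det := by
      rw [Matrix.det_smul]
      simp only [isUnit_iff_ne_zero] at hM ⊢
      simp [hM]
    rw [Matrix.nonsing_inv_apply_not_isUnit _ h1, Matrix.nonsing_inv_apply_not_isUnit _ hM,
      smul_zero]

variable {T' : ℕ} {n : Type*} [Fintype n] [DecidableEq n]

lemma gram_inv_transpose (A : Matrix (Fin T') n ℝ) : ((Aᵀ * A)⁻¹)ᵀ = (Aᵀ * A)⁻¹ := by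
  rw [Matrix.transpose_nonsing_inv, Matrix.transpose_mul, Matrix.transpose_transpose]

lemma projM_transpose (A : Matrix (Fin T') n ℝ) : (projM A)ᵀ = projM A := by
  simp only [projM, Matrix.transpose_mul, Matrix.transpose_transpose, gram_inv_transpose,
    Matrix.mul_assoc]

lemma annM_transpose (A : Matrix (Fin T') n ℝ) : (annM A)ᵀ = annM A := by
  simp [annM, Matrix.transpose_sub, projM_transpose]

lemma projM_mul_self (A : Matrix (Fin T') n ℝ) (h : IsUnit (Aᵀ * A)) : projM A * A = A := by
  have hd : IsUnit (Aᵀ * A).det := (Matrix.isUnit_iff_isUnit_det _).mp h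
  rw [projM, Matrix.mul_assoc, Matrix.mul_assoc, Matrix.nonsing_inv_mul _ hd, Matrix.mul_one]

lemma annM_mul_self (A : Matrix (Fin T') n ℝ) (h : IsUnit (Aᵀ * A)) : annM A * A = 0 := by
  rw [annM, Matrix.sub_mul, Matrix.one_mul, projM_mul_self A h, sub_self]

lemma projM_idem (A : Matrix (Fin T') n ℝ) (h : IsUnit (Aᵀ * A)) :
    projM A * projM A = projM A := by
  calc projM A * projM A = projM A * A * ((Aᵀ * A)⁻¹ * Aᵀ) := by
        simp only [projM, Matrix.mul_assoc]
    _ = A * ((Aᵀ * A)⁻¹ * Aᵀ) := by rw [projM_mul_self A h]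
    _ = projM A := by rw [projM, Matrix.mul_assoc]

lemma annM_idem (A : Matrix (Fin T') n ℝ) (h : IsUnit (Aᵀ * A)) :
    annM A * annM A = annM A := by
  simp only [annM, Matrix.sub_mul, Matrix.mul_sub, Matrix.one_mul, Matrix.mul_one,
    projM_idem A h]
  abel

lemma projM_mul_unit (A : Matrix (Fin T') n ℝ) (U : Matrix n n ℝ) (hU : IsUnit U.det) :
    projM (A * U) = projM A := by
  have hUT : IsUnit Uᵀ.det := by rwa [Matrix.det_transpose]
  have h1 : (A * U)ᵀ * (A * U) = Uᵀ * (Aᵀ * A) * U := by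
    simp [Matrix.transpose_mul, Matrix.mul_assoc]
  rw [projM, h1, Matrix.mul_inv_rev, Matrix.mul_inv_rev]
  rw [Matrix.transpose_mul]
  calc A * U * (U⁻¹ * ((Aᵀ * A)⁻¹ * (Uᵀ)⁻¹)) * (Uᵀ * Aᵀ)
      = A * (U * U⁻¹) * ((Aᵀ * A)⁻¹ * ((Uᵀ)⁻¹ * Uᵀ)) * Aᵀ := by
        simp only [Matrix.mul_assoc]
    _ = projM A := by
        rw [Matrix.mul_nonsing_inv _ hU, Matrix.nonsing_inv_mul _ hUT, Matrix.mul_one,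
          Matrix.mul_one, projM, Matrix.mul_assoc]

lemma aux_rank_inj {m' n' : Type*} [Fintype m'] [Fintype n'] [DecidableEq n']
    (A : Matrix m' n' ℝ) (h : A.rank = Fintype.card n') :
    ∀ v : n' → ℝ, A *ᵥ v = 0 → v = 0 := by
  rw [← Matrix.ker_mulVecLin_eq_bot_iff]
  have h2 := LinearMap.finrank_range_add_finrank_ker A.mulVecLin
  rw [Module.finrank_pi] at h2
  rw [Matrix.rank] at h
  have h3 : Module.finrank ℝ (LinearMap.ker A.mulVecLin) = 0 := by omega
  exact Submodule.finrank_eq_zero.mp h3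

lemma aux_isUnit_gram {m' n' : Type*} [Fintype m'] [Fintype n'] [DecidableEq n']
    (C : Matrix m' n' ℝ) (h : ∀ v : n' → ℝ, C *ᵥ v = 0 → v = 0) :
    IsUnit (Cᵀ * C) := by
  apply Matrix.mulVec_injective_iff_isUnit.mp
  have hker : LinearMap.ker (Cᵀ * C).mulVecLin = ⊥ := by
    rw [Matrix.ker_mulVecLin_transpose_mul_self, Matrix.ker_mulVecLin_eq_bot_iff]
    exact h
  have hinj := LinearMap.ker_eq_bot.mp hker
  rw [← Matrix.coe_mulVecLin]
  exact hinj

end AuxGeneric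

section AuxQuad

variable {G' T' : ℕ}

lemma aux_sandwich_inv (S R : Matrix (Fin G') (Fin G') ℝ) (hR : IsUnit R.det) :
    (R⁻¹ * S * (R⁻¹)ᵀ)⁻¹ = Rᵀ * S⁻¹ * R := by
  have hRT : IsUnit Rᵀ.det := by rwa [Matrix.det_transpose]
  rw [Matrix.mul_inv_rev, Matrix.mul_inv_rev, Matrix.transpose_nonsing_inv,
    Matrix.nonsing_inv_nonsing_inv _ hRT, Matrix.nonsing_inv_nonsing_inv _ hR,
    Matrix.mul_assoc]

lemma aux_sand2 (S R : Matrix (Fin G') (Fin G') ℝ) :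
    (Rᵀ * S * R)⁻¹ = R⁻¹ * S⁻¹ * (R⁻¹)ᵀ := by
  rw [Matrix.mul_inv_rev, Matrix.mul_inv_rev, ← Matrix.transpose_nonsing_inv,
    Matrix.mul_assoc]

lemma aux_BmulUnit (S : Matrix (Fin G') (Fin G') ℝ) (W : Matrix (Fin G') (Fin T') ℝ)
    (R : Matrix (Fin G') (Fin G') ℝ) (hR : IsUnit R.det) :
    (Rᵀ * S * R)⁻¹ * (Rᵀ * W) = R⁻¹ * (S⁻¹ * W) := by
  have hRT : IsUnit Rᵀ.det := by rwa [Matrix.det_transpose]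
  rw [Matrix.mul_inv_rev, Matrix.mul_inv_rev]
  have h1 : (Rᵀ)⁻¹ * (Rᵀ * W) = W := by
    rw [← Matrix.mul_assoc, Matrix.nonsing_inv_mul _ hRT, Matrix.one_mul]
  simp only [Matrix.mul_assoc, h1]

lemma aux_quad0 (d : Fin G' → ℝ) (S R : Matrix (Fin G') (Fin G') ℝ) (hR : IsUnit R.det)
    (c : ℝ) :
    (c • (R⁻¹ *ᵥ d)) ⬝ᵥ ((R⁻¹ * S * (R⁻¹)ᵀ)⁻¹ *ᵥ (c • (R⁻¹ *ᵥ d)))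
      = c ^ 2 * (d ⬝ᵥ (S⁻¹ *ᵥ d)) := by
  rw [aux_sandwich_inv S R hR]
  have h1 : (Rᵀ * S⁻¹ * R) *ᵥ (R⁻¹ *ᵥ d) = Rᵀ *ᵥ (S⁻¹ *ᵥ d) := by
    rw [Matrix.mulVec_mulVec, Matrix.mul_assoc, Matrix.mul_nonsing_inv _ hR, Matrix.mul_one,
      ← Matrix.mulVec_mulVec]
  have h2 : (R⁻¹ *ᵥ d) ⬝ᵥ (Rᵀ *ᵥ (S⁻¹ *ᵥ d)) = d ⬝ᵥ (S⁻¹ *ᵥ d) := by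
    rw [Matrix.dotProduct_mulVec, Matrix.vecMul_transpose, Matrix.mulVec_mulVec,
      Matrix.mul_nonsing_inv _ hR, Matrix.one_mulVec]
  rw [Matrix.mulVec_smul, smul_dotProduct, dotProduct_smul, h1, h2, smul_eq_mul, smul_eq_mul]
  ring

lemma aux_quad (d : Fin G' → ℝ) (S R : Matrix (Fin G') (Fin G') ℝ) (hR : IsUnit R.det)
    (c : ℝ) (hc : c ≠ 0) :
    (c • (R⁻¹ *ᵥ d)) ⬝ᵥ ((c ^ 2 • (R⁻¹ * S * (R⁻¹)ᵀ))⁻¹ *ᵥ (c • (R⁻¹ *ᵥ d)))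
      = d ⬝ᵥ (S⁻¹ *ᵥ d) := by
  rw [aux_smul_inv, Matrix.smul_mulVec, dotProduct_smul, aux_quad0 d S R hR c,
    smul_eq_mul, ← mul_assoc, inv_mul_cancel₀ (pow_ne_zero 2 hc), one_mul]

lemma aux_quadR (c : ℝ) (y b : Fin T' → ℝ) (Ψ : Matrix (Fin T') (Fin T') ℝ)
    (hsym : Ψᵀ = Ψ) (hb : Ψ *ᵥ b = 0) :
    (c • y + b) ⬝ᵥ (Ψ *ᵥ (c • y + b)) = c ^ 2 * (y ⬝ᵥ (Ψ *ᵥ y)) := by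
  have hb2 : b ⬝ᵥ (Ψ *ᵥ y) = 0 := by
    rw [Matrix.dotProduct_mulVec, ← hsym, Matrix.vecMul_transpose, hb, zero_dotProduct]
  rw [Matrix.mulVec_add, Matrix.mulVec_smul, hb, add_zero, add_dotProduct,
    smul_dotProduct, dotProduct_smul, dotProduct_smul, hb2, smul_eq_mul, smul_eq_mul,
    smul_eq_mul, mul_zero, add_zero]
  ring

end AuxQuad


/-- **Block-triangular invariance of exogeneity tests.**  Under the rank condition, let
`R₁₁ ≠ 0` be a scalar, `R₂₁ ∈ ℝ^G`, and `R₂₂` an invertible `G×G` matrix; set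
`y* = R₁₁y + YR₂₁` and `Y* = YR₂₂`.  Then the rank condition holds for `(y*, Y*)`,
`C₁* = R₂₂⁻¹C₁`, `β̃* − β̂* = R₁₁R₂₂⁻¹(β̃ − β̂)`, `Δ̂* = R₂₂⁻¹Δ̂(R₂₂⁻¹)ᵀ`,
`σ̂*² = R₁₁²σ̂²`, `σ̃*² = R₁₁²σ̃²`, `σ̃₁*² = R₁₁²σ̃₁²`, `σ̃₂*² = R₁₁²σ̃₂²`; consequently
(whenever the relevant scaling factors are nonzero or covariance matrices invertible)
every exogeneity statistic is invariant: `T_i* = T_i` (`i = 1,2,3,4`), `H_j* = H_j`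
(`j = 1,2,3`), and `R* = R`. -/
theorem stmt16 {T G k₁ k₂ : ℕ}
    (hT : 0 < T) (hG : 0 < G) (hk₁ : 0 < k₁) (hk₂ : 0 < k₂)
    (y : Fin T → ℝ) (Y : Matrix (Fin T) (Fin G) ℝ)
    (X₁ : Matrix (Fin T) (Fin k₁) ℝ) (X₂ : Matrix (Fin T) (Fin k₂) ℝ)
    (hrank : RankCond Y X₁ X₂)
    (R₁₁ : ℝ) (hR₁₁ : R₁₁ ≠ 0) (R₂₁ : Fin G → ℝ)
    (R₂₂ : Matrix (Fin G) (Fin G) ℝ) (hR₂₂ : IsUnit R₂₂)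
    (ystar : Fin T → ℝ) (hystar : ystar = R₁₁ • y + Y *ᵥ R₂₁)
    (Ystar : Matrix (Fin T) (Fin G) ℝ) (hYstar : Ystar = Y * R₂₂) :
    RankCond Ystar X₁ X₂ ∧
    C1 Ystar X₁ X₂ = R₂₂⁻¹ * C1 Y X₁ X₂ ∧
    beta2S ystar Ystar X₁ X₂ - betaOLS ystar Ystar X₁
      = R₁₁ • (R₂₂⁻¹ *ᵥ (beta2S y Y X₁ X₂ - betaOLS y Y X₁)) ∧
    Dhat Ystar X₁ X₂ = R₂₂⁻¹ * Dhat Y X₁ X₂ * (R₂₂⁻¹)ᵀ ∧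
    sigHat2 ystar Ystar X₁ = R₁₁ ^ 2 * sigHat2 y Y X₁ ∧
    sigTil2 ystar Ystar X₁ X₂ = R₁₁ ^ 2 * sigTil2 y Y X₁ X₂ ∧
    sigTil1sq ystar Ystar X₁ X₂ = R₁₁ ^ 2 * sigTil1sq y Y X₁ X₂ ∧
    sigTil2sq ystar Ystar X₁ X₂ = R₁₁ ^ 2 * sigTil2sq y Y X₁ X₂ ∧
    (sigTil1sq y Y X₁ X₂ ≠ 0 →
      ((k₂ : ℝ) - (G : ℝ)) / (G : ℝ) *
          ((beta2S ystar Ystar X₁ X₂ - betaOLS ystar Ystar X₁) ⬝ᵥ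
            ((sigTil1sq ystar Ystar X₁ X₂ • Dhat Ystar X₁ X₂)⁻¹ *ᵥ
              (beta2S ystar Ystar X₁ X₂ - betaOLS ystar Ystar X₁)))
        = ((k₂ : ℝ) - (G : ℝ)) / (G : ℝ) *
            ((beta2S y Y X₁ X₂ - betaOLS y Y X₁) ⬝ᵥ
              ((sigTil1sq y Y X₁ X₂ • Dhat Y X₁ X₂)⁻¹ *ᵥ
                (beta2S y Y X₁ X₂ - betaOLS y Y X₁)))) ∧
    (sigTil2sq y Y X₁ X₂ ≠ 0 →
      ((T : ℝ) - (k₁ : ℝ) - 2 * (G : ℝ)) / (G : ℝ) *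
          ((beta2S ystar Ystar X₁ X₂ - betaOLS ystar Ystar X₁) ⬝ᵥ
            ((sigTil2sq ystar Ystar X₁ X₂ • Dhat Ystar X₁ X₂)⁻¹ *ᵥ
              (beta2S ystar Ystar X₁ X₂ - betaOLS ystar Ystar X₁)))
        = ((T : ℝ) - (k₁ : ℝ) - 2 * (G : ℝ)) / (G : ℝ) *
            ((beta2S y Y X₁ X₂ - betaOLS y Y X₁) ⬝ᵥ
              ((sigTil2sq y Y X₁ X₂ • Dhat Y X₁ X₂)⁻¹ *ᵥ
                (beta2S y Y X₁ X₂ - betaOLS y Y X₁)))) ∧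
    (sigTil2 y Y X₁ X₂ ≠ 0 →
      ((T : ℝ) - (k₁ : ℝ) - (G : ℝ)) *
          ((beta2S ystar Ystar X₁ X₂ - betaOLS ystar Ystar X₁) ⬝ᵥ
            ((sigTil2 ystar Ystar X₁ X₂ • Dhat Ystar X₁ X₂)⁻¹ *ᵥ
              (beta2S ystar Ystar X₁ X₂ - betaOLS ystar Ystar X₁)))
        = ((T : ℝ) - (k₁ : ℝ) - (G : ℝ)) *
            ((beta2S y Y X₁ X₂ - betaOLS y Y X₁) ⬝ᵥ
              ((sigTil2 y Y X₁ X₂ • Dhat Y X₁ X₂)⁻¹ *ᵥ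
                (beta2S y Y X₁ X₂ - betaOLS y Y X₁)))) ∧
    (sigHat2 y Y X₁ ≠ 0 →
      ((T : ℝ) - (k₁ : ℝ) - (G : ℝ)) *
          ((beta2S ystar Ystar X₁ X₂ - betaOLS ystar Ystar X₁) ⬝ᵥ
            ((sigHat2 ystar Ystar X₁ • Dhat Ystar X₁ X₂)⁻¹ *ᵥ
              (beta2S ystar Ystar X₁ X₂ - betaOLS ystar Ystar X₁)))
        = ((T : ℝ) - (k₁ : ℝ) - (G : ℝ)) *
            ((beta2S y Y X₁ X₂ - betaOLS y Y X₁) ⬝ᵥ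
              ((sigHat2 y Y X₁ • Dhat Y X₁ X₂)⁻¹ *ᵥ
                (beta2S y Y X₁ X₂ - betaOLS y Y X₁)))) ∧
    (IsUnit (sigTil2 y Y X₁ X₂ • (OmIV Y X₁ X₂)⁻¹ - sigHat2 y Y X₁ • (OmLS Y X₁)⁻¹) →
      (T : ℝ) *
          ((beta2S ystar Ystar X₁ X₂ - betaOLS ystar Ystar X₁) ⬝ᵥ
            ((sigTil2 ystar Ystar X₁ X₂ • (OmIV Ystar X₁ X₂)⁻¹ -
                sigHat2 ystar Ystar X₁ • (OmLS Ystar X₁)⁻¹)⁻¹ *ᵥ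
              (beta2S ystar Ystar X₁ X₂ - betaOLS ystar Ystar X₁)))
        = (T : ℝ) *
            ((beta2S y Y X₁ X₂ - betaOLS y Y X₁) ⬝ᵥ
              ((sigTil2 y Y X₁ X₂ • (OmIV Y X₁ X₂)⁻¹ -
                  sigHat2 y Y X₁ • (OmLS Y X₁)⁻¹)⁻¹ *ᵥ
                (beta2S y Y X₁ X₂ - betaOLS y Y X₁)))) ∧
    (sigTil2 y Y X₁ X₂ ≠ 0 →
      (T : ℝ) *
          ((beta2S ystar Ystar X₁ X₂ - betaOLS ystar Ystar X₁) ⬝ᵥ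
            ((sigTil2 ystar Ystar X₁ X₂ • Dhat Ystar X₁ X₂)⁻¹ *ᵥ
              (beta2S ystar Ystar X₁ X₂ - betaOLS ystar Ystar X₁)))
        = (T : ℝ) *
            ((beta2S y Y X₁ X₂ - betaOLS y Y X₁) ⬝ᵥ
              ((sigTil2 y Y X₁ X₂ • Dhat Y X₁ X₂)⁻¹ *ᵥ
                (beta2S y Y X₁ X₂ - betaOLS y Y X₁)))) ∧
    (sigHat2 y Y X₁ ≠ 0 →
      (T : ℝ) *
          ((beta2S ystar Ystar X₁ X₂ - betaOLS ystar Ystar X₁) ⬝ᵥ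
            ((sigHat2 ystar Ystar X₁ • Dhat Ystar X₁ X₂)⁻¹ *ᵥ
              (beta2S ystar Ystar X₁ X₂ - betaOLS ystar Ystar X₁)))
        = (T : ℝ) *
            ((beta2S y Y X₁ X₂ - betaOLS y Y X₁) ⬝ᵥ
              ((sigHat2 y Y X₁ • Dhat Y X₁ X₂)⁻¹ *ᵥ
                (beta2S y Y X₁ X₂ - betaOLS y Y X₁)))) ∧
    (y ⬝ᵥ (LamR Y X₁ X₂ *ᵥ y) ≠ 0 →
      ((T : ℝ) - (k₁ : ℝ) - (k₂ : ℝ) - (G : ℝ)) / (k₂ : ℝ) *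
          (ystar ⬝ᵥ (PsiR Ystar X₁ X₂ *ᵥ ystar) /
            (ystar ⬝ᵥ (LamR Ystar X₁ X₂ *ᵥ ystar)))
        = ((T : ℝ) - (k₁ : ℝ) - (k₂ : ℝ) - (G : ℝ)) / (k₂ : ℝ) *
            (y ⬝ᵥ (PsiR Y X₁ X₂ *ᵥ y) / (y ⬝ᵥ (LamR Y X₁ X₂ *ᵥ y)))) := by
  obtain ⟨h1, h2, h3, h4⟩ := hrank
  have hR22det : IsUnit R₂₂.det := (Matrix.isUnit_iff_isUnit_det R₂₂).mp hR₂₂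
  have hX1u : IsUnit (X₁ᵀ * X₁) :=
    aux_isUnit_gram X₁ (aux_rank_inj X₁ (by simpa using h1))
  have hXu : IsUnit ((fromCols X₁ X₂)ᵀ * fromCols X₁ X₂) :=
    aux_isUnit_gram _ (aux_rank_inj _ (by simpa using h2))
  have hinjZ : ∀ v, fromCols Y (fromCols X₁ X₂) *ᵥ v = 0 → v = 0 :=
    aux_rank_inj _ (by simpa using h3)
  have hinj4 : ∀ v, fromCols (Pm X₁ X₂ * Y) X₁ *ᵥ v = 0 → v = 0 :=
    aux_rank_inj _ (by simpa using h4)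
  -- basic projector facts
  have hM1s : (M1 X₁)ᵀ = M1 X₁ := by rw [M1]; exact annM_transpose X₁
  have hM1i : M1 X₁ * M1 X₁ = M1 X₁ := by rw [M1]; exact annM_idem X₁ hX1u
  have hPms : (Pm X₁ X₂)ᵀ = Pm X₁ X₂ := by rw [Pm]; exact projM_transpose _
  have hPmi : Pm X₁ X₂ * Pm X₁ X₂ = Pm X₁ X₂ := by rw [Pm]; exact projM_idem _ hXu
  have hX1eq : fromCols X₁ X₂ *
      fromRows (1 : Matrix (Fin k₁) (Fin k₁) ℝ) (0 : Matrix (Fin k₂) (Fin k₁) ℝ) = X₁ := by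
    rw [Matrix.fromCols_mul_fromRows]; simp
  have hPX1 : Pm X₁ X₂ * X₁ = X₁ := by
    calc Pm X₁ X₂ * X₁
        = (projM (fromCols X₁ X₂) * fromCols X₁ X₂) *
            fromRows (1 : Matrix (Fin k₁) (Fin k₁) ℝ) (0 : Matrix (Fin k₂) (Fin k₁) ℝ) := by
          rw [Pm, Matrix.mul_assoc, hX1eq]
      _ = X₁ := by rw [projM_mul_self _ hXu, hX1eq]
  have hPP1 : Pm X₁ X₂ * projM X₁ = projM X₁ := by
    simp only [projM, ← Matrix.mul_assoc, hPX1]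
  have hP1P : projM X₁ * Pm X₁ X₂ = projM X₁ := by
    have := congrArg Matrix.transpose hPP1
    rwa [Matrix.transpose_mul, projM_transpose, hPms] at this
  have hN1eq : N1 X₁ X₂ = Pm X₁ X₂ - projM X₁ := by
    rw [N1, M1, annM, Matrix.sub_mul, Matrix.one_mul, hP1P]
  have hN1s : (N1 X₁ X₂)ᵀ = N1 X₁ X₂ := by
    rw [hN1eq, Matrix.transpose_sub, hPms, projM_transpose]
  have hN1i : N1 X₁ X₂ * N1 X₁ X₂ = N1 X₁ X₂ := by
    rw [hN1eq]
    simp only [Matrix.sub_mul, Matrix.mul_sub, hPmi, hPP1, hP1P, projM_idem X₁ hX1u]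
    abel
  -- kernels and invertibility of the Gram matrices
  have hprojw : ∀ w : Fin T → ℝ,
      projM X₁ *ᵥ w = X₁ *ᵥ (((X₁ᵀ * X₁)⁻¹ * X₁ᵀ) *ᵥ w) := by
    intro w
    rw [Matrix.mulVec_mulVec, projM, Matrix.mul_assoc]
  have hkerM1Y : ∀ v : Fin G → ℝ, (M1 X₁ * Y) *ᵥ v = 0 → v = 0 := by
    intro v hv
    rw [← Matrix.mulVec_mulVec, M1, annM, Matrix.sub_mulVec, Matrix.one_mulVec] at hv
    have hZ : fromCols Y (fromCols X₁ X₂) *ᵥ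
        Sum.elim v (Sum.elim (-(((X₁ᵀ * X₁)⁻¹ * X₁ᵀ) *ᵥ (Y *ᵥ v))) 0) = 0 := by
      rw [Matrix.fromCols_mulVec_sumElim, Matrix.fromCols_mulVec_sumElim,
        Matrix.mulVec_neg, Matrix.mulVec_zero, add_zero, ← hprojw]
      simpa [sub_eq_add_neg] using hv
    have hz := hinjZ _ hZ
    funext i; exact congrFun hz (Sum.inl i)
  have hkerN1Y : ∀ v : Fin G → ℝ, (N1 X₁ X₂ * Y) *ᵥ v = 0 → v = 0 := by
    intro v hv
    rw [← Matrix.mulVec_mulVec, hN1eq, Matrix.sub_mulVec] at hv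
    have h4v : fromCols (Pm X₁ X₂ * Y) X₁ *ᵥ
        Sum.elim v (-(((X₁ᵀ * X₁)⁻¹ * X₁ᵀ) *ᵥ (Y *ᵥ v))) = 0 := by
      rw [Matrix.fromCols_mulVec_sumElim, Matrix.mulVec_neg, ← hprojw,
        ← Matrix.mulVec_mulVec]
      simpa [sub_eq_add_neg] using hv
    have hz := hinj4 _ h4v
    funext i; exact congrFun hz (Sum.inl i)
  have hgramM1Y : Yᵀ * M1 X₁ * Y = (M1 X₁ * Y)ᵀ * (M1 X₁ * Y) := by
    have e : (M1 X₁ * Y)ᵀ * (M1 X₁ * Y) = Yᵀ * (M1 X₁ * M1 X₁) * Y := by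
      rw [Matrix.transpose_mul, hM1s]; simp [Matrix.mul_assoc]
    rw [e, hM1i]
  have hgramN1Y : Yᵀ * N1 X₁ X₂ * Y = (N1 X₁ X₂ * Y)ᵀ * (N1 X₁ X₂ * Y) := by
    have e : (N1 X₁ X₂ * Y)ᵀ * (N1 X₁ X₂ * Y) = Yᵀ * (N1 X₁ X₂ * N1 X₁ X₂) * Y := by
      rw [Matrix.transpose_mul, hN1s]; simp [Matrix.mul_assoc]
    rw [e, hN1i]
  have hM1Yu : IsUnit (Yᵀ * M1 X₁ * Y) := by
    rw [hgramM1Y]; exact aux_isUnit_gram _ hkerM1Y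
  have hN1Yu : IsUnit (Yᵀ * N1 X₁ X₂ * Y) := by
    rw [hgramN1Y]; exact aux_isUnit_gram _ hkerN1Y
  -- B matrices
  have hB1Y : B1 Y X₁ * Y = 1 := by
    rw [B1, Matrix.mul_assoc, Matrix.nonsing_inv_mul _
      ((Matrix.isUnit_iff_isUnit_det _).mp hM1Yu)]
  have hB2Y : B2 Y X₁ X₂ * Y = 1 := by
    rw [B2, Matrix.mul_assoc, Matrix.nonsing_inv_mul _
      ((Matrix.isUnit_iff_isUnit_det _).mp hN1Yu)]
  have hB1star : B1 Ystar X₁ = R₂₂⁻¹ * B1 Y X₁ := by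
    rw [hYstar, B1, B1]
    have e1 : (Y * R₂₂)ᵀ * M1 X₁ * (Y * R₂₂) = R₂₂ᵀ * (Yᵀ * M1 X₁ * Y) * R₂₂ := by
      rw [Matrix.transpose_mul]; simp [Matrix.mul_assoc]
    have e2 : (Y * R₂₂)ᵀ * M1 X₁ = R₂₂ᵀ * (Yᵀ * M1 X₁) := by
      rw [Matrix.transpose_mul, Matrix.mul_assoc]
    rw [e1, e2, aux_BmulUnit _ _ _ hR22det]
  have hB2star : B2 Ystar X₁ X₂ = R₂₂⁻¹ * B2 Y X₁ X₂ := by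
    rw [hYstar, B2, B2]
    have e1 : (Y * R₂₂)ᵀ * N1 X₁ X₂ * (Y * R₂₂) = R₂₂ᵀ * (Yᵀ * N1 X₁ X₂ * Y) * R₂₂ := by
      rw [Matrix.transpose_mul]; simp [Matrix.mul_assoc]
    have e2 : (Y * R₂₂)ᵀ * N1 X₁ X₂ = R₂₂ᵀ * (Yᵀ * N1 X₁ X₂) := by
      rw [Matrix.transpose_mul, Matrix.mul_assoc]
    rw [e1, e2, aux_BmulUnit _ _ _ hR22det]
  have hC1star : C1 Ystar X₁ X₂ = R₂₂⁻¹ * C1 Y X₁ X₂ := by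
    rw [C1, C1, hB1star, hB2star, Matrix.mul_sub]
  -- beta transfers
  have hbols : betaOLS ystar Ystar X₁
      = R₁₁ • (R₂₂⁻¹ *ᵥ betaOLS y Y X₁) + R₂₂⁻¹ *ᵥ R₂₁ := by
    rw [betaOLS, hB1star, hystar, Matrix.mulVec_add, Matrix.mulVec_smul]
    congr 1
    · rw [betaOLS, ← Matrix.mulVec_mulVec]
    · have e : B1 Y X₁ *ᵥ (Y *ᵥ R₂₁) = R₂₁ := by
        rw [Matrix.mulVec_mulVec, hB1Y, Matrix.one_mulVec]
      rw [← Matrix.mulVec_mulVec, e]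
  have hb2s : beta2S ystar Ystar X₁ X₂
      = R₁₁ • (R₂₂⁻¹ *ᵥ beta2S y Y X₁ X₂) + R₂₂⁻¹ *ᵥ R₂₁ := by
    rw [beta2S, hB2star, hystar, Matrix.mulVec_add, Matrix.mulVec_smul]
    congr 1
    · rw [beta2S, ← Matrix.mulVec_mulVec]
    · have e : B2 Y X₁ X₂ *ᵥ (Y *ᵥ R₂₁) = R₂₁ := by
        rw [Matrix.mulVec_mulVec, hB2Y, Matrix.one_mulVec]
      rw [← Matrix.mulVec_mulVec, e]
  have hdiff : beta2S ystar Ystar X₁ X₂ - betaOLS ystar Ystar X₁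
      = R₁₁ • (R₂₂⁻¹ *ᵥ (beta2S y Y X₁ X₂ - betaOLS y Y X₁)) := by
    rw [hb2s, hbols, Matrix.mulVec_sub, smul_sub]
    abel
  have hYmul : ∀ v : Fin G → ℝ, Ystar *ᵥ (R₂₂⁻¹ *ᵥ v) = Y *ᵥ v := by
    intro v
    rw [hYstar, Matrix.mulVec_mulVec, Matrix.mul_assoc,
      Matrix.mul_nonsing_inv _ hR22det, Matrix.mul_one]
  have hresO : ystar - Ystar *ᵥ betaOLS ystar Ystar X₁
      = R₁₁ • (y - Y *ᵥ betaOLS y Y X₁) := by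
    rw [hbols, Matrix.mulVec_add, Matrix.mulVec_smul, hYmul, hYmul, hystar, smul_sub]
    abel
  have hres2 : ystar - Ystar *ᵥ beta2S ystar Ystar X₁ X₂
      = R₁₁ • (y - Y *ᵥ beta2S y Y X₁ X₂) := by
    rw [hb2s, Matrix.mulVec_add, Matrix.mulVec_smul, hYmul, hYmul, hystar, smul_sub]
    abel
  -- scalar transfers
  have hsq : ∀ (u : Fin T → ℝ) (M : Matrix (Fin T) (Fin T) ℝ),
      (R₁₁ • u) ⬝ᵥ (M *ᵥ (R₁₁ • u)) = R₁₁ ^ 2 * (u ⬝ᵥ (M *ᵥ u)) := by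
    intro u M
    rw [Matrix.mulVec_smul, smul_dotProduct, dotProduct_smul, smul_eq_mul, smul_eq_mul]
    ring
  have hsigHat : sigHat2 ystar Ystar X₁ = R₁₁ ^ 2 * sigHat2 y Y X₁ := by
    rw [sigHat2, sigHat2, hresO, hsq]; ring
  have hsigTil : sigTil2 ystar Ystar X₁ X₂ = R₁₁ ^ 2 * sigTil2 y Y X₁ X₂ := by
    rw [sigTil2, sigTil2, hres2, hsq]; ring
  have hsigTil1 : sigTil1sq ystar Ystar X₁ X₂ = R₁₁ ^ 2 * sigTil1sq y Y X₁ X₂ := by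
    rw [sigTil1sq, sigTil1sq, hres2, hsq]; ring
  -- Dhat transfer
  have hOmIVstar : OmIV Ystar X₁ X₂ = R₂₂ᵀ * OmIV Y X₁ X₂ * R₂₂ := by
    rw [hYstar, OmIV, OmIV]
    have e : (Y * R₂₂)ᵀ * N1 X₁ X₂ * (Y * R₂₂) = R₂₂ᵀ * (Yᵀ * N1 X₁ X₂ * Y) * R₂₂ := by
      rw [Matrix.transpose_mul]; simp [Matrix.mul_assoc]
    rw [e, Matrix.mul_smul, Matrix.smul_mul]
  have hOmLSstar : OmLS Ystar X₁ = R₂₂ᵀ * OmLS Y X₁ * R₂₂ := by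
    rw [hYstar, OmLS, OmLS]
    have e : (Y * R₂₂)ᵀ * M1 X₁ * (Y * R₂₂) = R₂₂ᵀ * (Yᵀ * M1 X₁ * Y) * R₂₂ := by
      rw [Matrix.transpose_mul]; simp [Matrix.mul_assoc]
    rw [e, Matrix.mul_smul, Matrix.smul_mul]
  have hOmIVinv : (OmIV Ystar X₁ X₂)⁻¹ = R₂₂⁻¹ * (OmIV Y X₁ X₂)⁻¹ * (R₂₂⁻¹)ᵀ := by
    rw [hOmIVstar, aux_sand2]
  have hOmLSinv : (OmLS Ystar X₁)⁻¹ = R₂₂⁻¹ * (OmLS Y X₁)⁻¹ * (R₂₂⁻¹)ᵀ := by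
    rw [hOmLSstar, aux_sand2]
  have hDstar : Dhat Ystar X₁ X₂ = R₂₂⁻¹ * Dhat Y X₁ X₂ * (R₂₂⁻¹)ᵀ := by
    rw [Dhat, Dhat, hOmIVinv, hOmLSinv, Matrix.mul_sub, Matrix.sub_mul]
  -- quadratic forms
  have hquadD : (beta2S ystar Ystar X₁ X₂ - betaOLS ystar Ystar X₁) ⬝ᵥ
      ((Dhat Ystar X₁ X₂)⁻¹ *ᵥ (beta2S ystar Ystar X₁ X₂ - betaOLS ystar Ystar X₁))
      = R₁₁ ^ 2 * ((beta2S y Y X₁ X₂ - betaOLS y Y X₁) ⬝ᵥ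
          ((Dhat Y X₁ X₂)⁻¹ *ᵥ (beta2S y Y X₁ X₂ - betaOLS y Y X₁))) := by
    rw [hdiff, hDstar, aux_quad0 _ _ _ hR22det]
  have hsig2sq : sigTil2sq ystar Ystar X₁ X₂ = R₁₁ ^ 2 * sigTil2sq y Y X₁ X₂ := by
    rw [sigTil2sq, sigTil2sq, hsigHat, hquadD]; ring
  have hterm : ∀ (s : ℝ) (M : Matrix (Fin G) (Fin G) ℝ),
      (R₁₁ ^ 2 * s) • (R₂₂⁻¹ * M * (R₂₂⁻¹)ᵀ)
        = R₁₁ ^ 2 • (R₂₂⁻¹ * (s • M) * (R₂₂⁻¹)ᵀ) := by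
    intro s M
    rw [Matrix.mul_smul, Matrix.smul_mul, smul_smul]
  have hstat : ∀ s : ℝ,
      (beta2S ystar Ystar X₁ X₂ - betaOLS ystar Ystar X₁) ⬝ᵥ
        (((R₁₁ ^ 2 * s) • Dhat Ystar X₁ X₂)⁻¹ *ᵥ
          (beta2S ystar Ystar X₁ X₂ - betaOLS ystar Ystar X₁))
      = (beta2S y Y X₁ X₂ - betaOLS y Y X₁) ⬝ᵥ
          ((s • Dhat Y X₁ X₂)⁻¹ *ᵥ (beta2S y Y X₁ X₂ - betaOLS y Y X₁)) := by
    intro s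
    have hm : (R₁₁ ^ 2 * s) • Dhat Ystar X₁ X₂
        = R₁₁ ^ 2 • (R₂₂⁻¹ * (s • Dhat Y X₁ X₂) * (R₂₂⁻¹)ᵀ) := by
      rw [hDstar, hterm]
    rw [hdiff, hm, aux_quad _ _ _ hR22det _ hR₁₁]
  -- rank condition transfer
  have hdetB3 : IsUnit (fromBlocks R₂₂ (0 : Matrix (Fin G) (Fin k₁ ⊕ Fin k₂) ℝ)
      (0 : Matrix (Fin k₁ ⊕ Fin k₂) (Fin G) ℝ)
      (1 : Matrix (Fin k₁ ⊕ Fin k₂) (Fin k₁ ⊕ Fin k₂) ℝ)).det := by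
    rw [Matrix.det_fromBlocks_zero₂₁]; simpa using hR22det
  have hdetB4 : IsUnit (fromBlocks R₂₂ (0 : Matrix (Fin G) (Fin k₁) ℝ)
      (0 : Matrix (Fin k₁) (Fin G) ℝ) (1 : Matrix (Fin k₁) (Fin k₁) ℝ)).det := by
    rw [Matrix.det_fromBlocks_zero₂₁]; simpa using hR22det
  have hZstar : fromCols Ystar (fromCols X₁ X₂)
      = fromCols Y (fromCols X₁ X₂) * (fromBlocks R₂₂ 0 0 1 : Matrix (Fin G ⊕ (Fin k₁ ⊕ Fin k₂)) (Fin G ⊕ (Fin k₁ ⊕ Fin k₂)) ℝ) := by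
    rw [Matrix.fromCols_mul_fromBlocks, hYstar]; simp
  have hPYstar : fromCols (Pm X₁ X₂ * Ystar) X₁
      = fromCols (Pm X₁ X₂ * Y) X₁ * (fromBlocks R₂₂ 0 0 1 : Matrix (Fin G ⊕ Fin k₁) (Fin G ⊕ Fin k₁) ℝ) := by
    rw [Matrix.fromCols_mul_fromBlocks, hYstar, ← Matrix.mul_assoc]; simp
  have hrankstar : RankCond Ystar X₁ X₂ := by
    refine ⟨h1, h2, ?_, ?_⟩
    · rw [hZstar, Matrix.rank_mul_eq_left_of_isUnit_det _ _ hdetB3]; exact h3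
    · rw [hPYstar, Matrix.rank_mul_eq_left_of_isUnit_det _ _ hdetB4]; exact h4
  -- R statistic ingredients
  have hinjYbar : ∀ w, Ybar Y X₁ *ᵥ w = 0 → w = 0 := by
    intro w hw
    have hwrep : w = Sum.elim (fun i => w (Sum.inl i)) (fun j => w (Sum.inr j)) := by
      funext x; cases x <;> rfl
    have hw' : fromCols Y (fromCols X₁ X₂) *ᵥ
        Sum.elim (fun i => w (Sum.inl i)) (Sum.elim (fun j => w (Sum.inr j)) 0) = 0 := by
      rw [Matrix.fromCols_mulVec_sumElim, Matrix.fromCols_mulVec_sumElim,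
        Matrix.mulVec_zero, add_zero]
      rw [Ybar, hwrep, Matrix.fromCols_mulVec_sumElim] at hw
      exact hw
    have hz := hinjZ _ hw'
    funext x
    cases x with
    | inl i => exact congrFun hz (Sum.inl i)
    | inr j => exact congrFun hz (Sum.inr (Sum.inl j))
  have hYbarU : IsUnit ((Ybar Y X₁)ᵀ * Ybar Y X₁) := aux_isUnit_gram _ hinjYbar
  have hZU : IsUnit ((Zfull Y X₁ X₂)ᵀ * Zfull Y X₁ X₂) := by
    rw [Zfull]; exact aux_isUnit_gram _ hinjZ
  have hYbarY : Ybar Y X₁ *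
      fromRows (1 : Matrix (Fin G) (Fin G) ℝ) (0 : Matrix (Fin k₁) (Fin G) ℝ) = Y := by
    rw [Ybar, Matrix.fromCols_mul_fromRows]; simp
  have hZY : Zfull Y X₁ X₂ *
      fromRows (1 : Matrix (Fin G) (Fin G) ℝ) (0 : Matrix (Fin k₁ ⊕ Fin k₂) (Fin G) ℝ)
      = Y := by
    rw [Zfull, Matrix.fromCols_mul_fromRows]; simp
  have hannYbarY : annM (Ybar Y X₁) * Y = 0 := by
    have h0 : annM (Ybar Y X₁) * (Ybar Y X₁ *
        fromRows (1 : Matrix (Fin G) (Fin G) ℝ) (0 : Matrix (Fin k₁) (Fin G) ℝ)) = 0 := by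
      rw [← Matrix.mul_assoc, annM_mul_self _ hYbarU, Matrix.zero_mul]
    rwa [hYbarY] at h0
  have hannZY : annM (Zfull Y X₁ X₂) * Y = 0 := by
    have h0 : annM (Zfull Y X₁ X₂) * (Zfull Y X₁ X₂ *
        fromRows (1 : Matrix (Fin G) (Fin G) ℝ)
          (0 : Matrix (Fin k₁ ⊕ Fin k₂) (Fin G) ℝ)) = 0 := by
      rw [← Matrix.mul_assoc, annM_mul_self _ hZU, Matrix.zero_mul]
    rwa [hZY] at h0
  have hPsiRsym : (PsiR Y X₁ X₂)ᵀ = PsiR Y X₁ X₂ := by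
    rw [PsiR, Matrix.transpose_smul, Matrix.transpose_sub, annM_transpose, annM_transpose]
  have hLamRsym : (LamR Y X₁ X₂)ᵀ = LamR Y X₁ X₂ := by
    rw [LamR, Matrix.transpose_smul, annM_transpose]
  have hPsiRb : PsiR Y X₁ X₂ *ᵥ (Y *ᵥ R₂₁) = 0 := by
    rw [PsiR, Matrix.smul_mulVec, Matrix.sub_mulVec, Matrix.mulVec_mulVec,
      Matrix.mulVec_mulVec, hannYbarY, hannZY]
    simp
  have hLamRb : LamR Y X₁ X₂ *ᵥ (Y *ᵥ R₂₁) = 0 := by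
    rw [LamR, Matrix.smul_mulVec, Matrix.mulVec_mulVec, hannZY]
    simp
  have hYbarStar : Ybar Ystar X₁ = Ybar Y X₁ * (fromBlocks R₂₂ 0 0 1 : Matrix (Fin G ⊕ Fin k₁) (Fin G ⊕ Fin k₁) ℝ) := by
    rw [Ybar, Ybar, Matrix.fromCols_mul_fromBlocks, hYstar]; simp
  have hZfullStar : Zfull Ystar X₁ X₂ = Zfull Y X₁ X₂ * (fromBlocks R₂₂ 0 0 1 : Matrix (Fin G ⊕ (Fin k₁ ⊕ Fin k₂)) (Fin G ⊕ (Fin k₁ ⊕ Fin k₂)) ℝ) := by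
    rw [Zfull, Zfull, Matrix.fromCols_mul_fromBlocks, hYstar]; simp
  have hannYbarStar : annM (Ybar Ystar X₁) = annM (Ybar Y X₁) := by
    rw [annM, annM, hYbarStar, projM_mul_unit _ _ hdetB4]
  have hannZStar : annM (Zfull Ystar X₁ X₂) = annM (Zfull Y X₁ X₂) := by
    rw [annM, annM, hZfullStar, projM_mul_unit _ _ hdetB3]
  have hPsiRstar : PsiR Ystar X₁ X₂ = PsiR Y X₁ X₂ := by
    rw [PsiR, PsiR, hannYbarStar, hannZStar]
  have hLamRstar : LamR Ystar X₁ X₂ = LamR Y X₁ X₂ := by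
    rw [LamR, LamR, hannZStar]
  -- assemble
  refine ⟨hrankstar, hC1star, hdiff, hDstar, hsigHat, hsigTil, hsigTil1, hsig2sq,
    ?_, ?_, ?_, ?_, ?_, ?_, ?_, ?_⟩
  · intro _; rw [hsigTil1, hstat]
  · intro _; rw [hsig2sq, hstat]
  · intro _; rw [hsigTil, hstat]
  · intro _; rw [hsigHat, hstat]
  · intro _
    have hmH : sigTil2 ystar Ystar X₁ X₂ • (OmIV Ystar X₁ X₂)⁻¹ -
        sigHat2 ystar Ystar X₁ • (OmLS Ystar X₁)⁻¹
        = R₁₁ ^ 2 • (R₂₂⁻¹ * (sigTil2 y Y X₁ X₂ • (OmIV Y X₁ X₂)⁻¹ -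
            sigHat2 y Y X₁ • (OmLS Y X₁)⁻¹) * (R₂₂⁻¹)ᵀ) := by
      rw [hsigTil, hsigHat, hOmIVinv, hOmLSinv, hterm, hterm, Matrix.mul_sub,
        Matrix.sub_mul, smul_sub]
    rw [hdiff, hmH, aux_quad _ _ _ hR22det _ hR₁₁]
  · intro _; rw [hsigTil, hstat]
  · intro _; rw [hsigHat, hstat]
  · intro _
    rw [hPsiRstar, hLamRstar, hystar, aux_quadR _ _ _ _ hPsiRsym hPsiRb,
      aux_quadR _ _ _ _ hLamRsym hLamRb,
      mul_div_mul_left _ _ (pow_ne_zero 2 hR₁₁)]
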